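/- Let K be a Markov kernel on a measurable space (X, 𝒳) and π a probability measure on (X, 𝒳) that is invariant for K (i.e. ∫ K(x, A) π(dx) = π(A) for all A ∈ 𝒳). Assume there exist C ∈ (0,∞) and ρ ∈ (0,1) such that |K^n(x, A) − π(A)| ≤ C ρ^n for every n ≥ 1, every x ∈ X and every A ∈ 𝒳. Then for every bounded measurable φ : X → ℝ, the function φ̂(x) := Σ_{n=0}^∞ (K^n(φ)(x) − π(φ)) satisfies the Poisson equation φ̂(x) − K(φ̂)(x) = φ(x) − π(φ) for every x ∈ X. -/

import Mathlib

open MeasureTheory ProbabilityTheory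
open scoped ENNReal

section Aux
variable {X : Type*} [MeasurableSpace X]

lemma integrable_of_abs_le {μ : Measure X} [IsFiniteMeasure μ] {f : X → ℝ} (hf : Measurable f)
    {M : ℝ} (hM : ∀ x, |f x| ≤ M) : Integrable f μ :=
  Integrable.mono' (integrable_const M) hf.aestronglyMeasurable
    (Filter.Eventually.of_forall fun x => by simpa [Real.norm_eq_abs] using hM x)

lemma tv_integral_bound (μ ν : Measure X) [IsProbabilityMeasure μ] [IsProbabilityMeasure ν]
    (f : X → ℝ) (hf : Measurable f) (M : ℝ) (hM0 : 0 ≤ M) (hM : ∀ x, |f x| ≤ M)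
    (ε : ℝ) (hε : 0 ≤ ε)
    (h : ∀ A : Set X, MeasurableSet A → |(μ A).toReal - (ν A).toReal| ≤ ε) :
    |∫ x, f x ∂μ - ∫ x, f x ∂ν| ≤ 2 * M * ε := by
  set ψ : X → ℝ := fun x => f x + M with hψdef
  have hψmeas : Measurable ψ := hf.add_const M
  have hψnn : ∀ x, 0 ≤ ψ x := fun x => by
    have := (abs_le.1 (hM x)).1; simp only [ψ]; linarith
  have hψle : ∀ x, ψ x ≤ 2 * M := fun x => by
    have := (abs_le.1 (hM x)).2; simp only [ψ]; linarith
  have hint : ∀ (κ : Measure X) [IsProbabilityMeasure κ], Integrable ψ κ := by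
    intro κ _
    exact integrable_of_abs_le hψmeas (M := 2 * M)
      (fun x => abs_le.2 ⟨by linarith [hψnn x, hM0], hψle x⟩)
  have key : ∀ (κ : Measure X) [IsProbabilityMeasure κ],
      ∫ x, ψ x ∂κ = ∫ t in Set.Ioc 0 (2 * M), (κ {a | t ≤ ψ a}).toReal := by
    intro κ _
    exact (hint κ).integral_eq_integral_Ioc_meas_le
      (Filter.Eventually.of_forall hψnn) (Filter.Eventually.of_forall hψle)
  have hshift : ∀ (κ : Measure X) [IsProbabilityMeasure κ],
      ∫ x, ψ x ∂κ = ∫ x, f x ∂κ + M := by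
    intro κ _
    rw [hψdef]
    rw [integral_add (integrable_of_abs_le hf hM) (integrable_const M), integral_const]
    simp
  set F : ℝ → ℝ := fun t => (μ {a | t ≤ ψ a}).toReal with hF
  set G : ℝ → ℝ := fun t => (ν {a | t ≤ ψ a}).toReal with hG
  have hmono : ∀ (κ : Measure X), Measurable fun t => (κ {a | t ≤ ψ a}).toReal := by
    intro κ
    refine Measurable.ennreal_toReal (Antitone.measurable ?_)
    exact fun s t hst => measure_mono (fun a ha => le_trans hst ha)
  haveI : IsFiniteMeasure ((volume : Measure ℝ).restrict (Set.Ioc 0 (2 * M))) :=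
    ⟨by rw [Measure.restrict_apply_univ]; exact measure_Ioc_lt_top⟩
  have hIOn : ∀ (κ : Measure X) [IsProbabilityMeasure κ],
      IntegrableOn (fun t => (κ {a | t ≤ ψ a}).toReal) (Set.Ioc 0 (2 * M)) volume := by
    intro κ _
    refine Integrable.mono' (integrable_const 1) (hmono κ).aestronglyMeasurable
      (Filter.Eventually.of_forall fun t => ?_)
    rw [Real.norm_eq_abs, abs_of_nonneg ENNReal.toReal_nonneg]
    exact ENNReal.toReal_le_of_le_ofReal zero_le_one (by simpa using prob_le_one)
  have hdiff : |∫ x, f x ∂μ - ∫ x, f x ∂ν|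
      = |∫ t in Set.Ioc 0 (2 * M), (F t - G t)| := by
    have h1 := hshift μ; have h2 := hshift ν
    have h3 := key μ; have h4 := key ν
    rw [integral_sub (hIOn μ) (hIOn ν)]
    have : ∫ x, f x ∂μ - ∫ x, f x ∂ν = ∫ x, ψ x ∂μ - ∫ x, ψ x ∂ν := by
      rw [h1, h2]; ring
    rw [this, h3, h4]
  rw [hdiff]
  have hbd : ‖∫ t in Set.Ioc 0 (2 * M), (F t - G t)‖
      ≤ ε * ((volume : Measure ℝ) (Set.Ioc 0 (2 * M))).toReal := by
    refine norm_setIntegral_le_of_norm_le_const measure_Ioc_lt_top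
      (fun t _ => ?_)
    rw [Real.norm_eq_abs]
    exact h {a | t ≤ ψ a} (measurableSet_le measurable_const hψmeas)
  rw [Real.norm_eq_abs] at hbd
  refine hbd.trans ?_
  rw [Real.volume_Ioc, ENNReal.toReal_ofReal (by linarith)]
  nlinarith

lemma integral_comp_markov (η κ : Kernel X X) [IsMarkovKernel η] [IsMarkovKernel κ]
    (x : X) (f : X → ℝ) (hf : Measurable f) (M : ℝ) (hM : ∀ x, |f x| ≤ M) :
    ∫ z, f z ∂((η.comp κ) x) = ∫ y, (∫ z, f z ∂(η y)) ∂(κ x) := by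
  have hM0 : 0 ≤ M := (abs_nonneg _).trans (hM x)
  set g : X → ℝ := fun z => f z + M with hg
  have hgm : Measurable g := hf.add_const M
  have hgnn : ∀ z, 0 ≤ g z := fun z => by
    have := (abs_le.1 (hM z)).1; simp only [g]; linarith
  have hgle : ∀ z, g z ≤ 2 * M := fun z => by
    have := (abs_le.1 (hM z)).2; simp only [g]; linarith
  set F : X → ℝ≥0∞ := fun y => ∫⁻ z, ENNReal.ofReal (g z) ∂(η y) with hFdef
  have hFmeas : Measurable F := by
    exact Measurable.lintegral_kernel_prod_right'
      (f := fun p : X × X => ENNReal.ofReal (g p.2))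
      (ENNReal.measurable_ofReal.comp (hgm.comp measurable_snd))
  have hFle : ∀ y, F y ≤ ENNReal.ofReal (2 * M) := by
    intro y
    calc F y ≤ ∫⁻ _, ENNReal.ofReal (2 * M) ∂(η y) :=
          lintegral_mono fun z => ENNReal.ofReal_le_ofReal (hgle z)
      _ = ENNReal.ofReal (2 * M) := by simp
  have hglin : ∀ (m : Measure X) [IsProbabilityMeasure m],
      ∫ z, g z ∂m = (∫⁻ z, ENNReal.ofReal (g z) ∂m).toReal := by
    intro m _
    exact integral_eq_lintegral_of_nonneg_ae (Filter.Eventually.of_forall hgnn)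
      hgm.aestronglyMeasurable
  have hfg : ∀ (m : Measure X) [IsProbabilityMeasure m],
      ∫ z, f z ∂m = ∫ z, g z ∂m - M := by
    intro m _
    rw [hg]
    rw [integral_add (integrable_of_abs_le hf hM) (integrable_const M), integral_const]
    simp
  haveI : IsMarkovKernel (η.comp κ) := inferInstance
  have hcomp : ∫⁻ z, ENNReal.ofReal (g z) ∂((η.comp κ) x) = ∫⁻ y, F y ∂(κ x) := by
    rw [Kernel.comp_apply, Measure.lintegral_bind (Kernel.measurable η).aemeasurable
      hgm.ennreal_ofReal.aemeasurable]
  have hIto : ∫ y, (F y).toReal ∂(κ x) = (∫⁻ y, F y ∂(κ x)).toReal := by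
    refine integral_toReal hFmeas.aemeasurable ?_
    exact Filter.Eventually.of_forall fun y => lt_of_le_of_lt (hFle y) ENNReal.ofReal_lt_top
  have hinner : ∀ y, ∫ z, f z ∂(η y) = (F y).toReal - M := by
    intro y
    rw [hfg (η y), hglin (η y)]
  calc ∫ z, f z ∂((η.comp κ) x)
      = (∫⁻ y, F y ∂(κ x)).toReal - M := by
        rw [hfg ((η.comp κ) x), hglin ((η.comp κ) x), hcomp]
    _ = ∫ y, (F y).toReal ∂(κ x) - M := by rw [hIto]
    _ = ∫ y, ((F y).toReal - M) ∂(κ x) := by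
        rw [integral_sub ?_ (integrable_const M), integral_const]
        · simp
        · refine Integrable.mono' (integrable_const (2 * M))
            hFmeas.ennreal_toReal.aestronglyMeasurable
            (Filter.Eventually.of_forall fun y => ?_)
          rw [Real.norm_eq_abs, abs_of_nonneg ENNReal.toReal_nonneg]
          exact ENNReal.toReal_le_of_le_ofReal (by linarith) (hFle y)
    _ = ∫ y, (∫ z, f z ∂(η y)) ∂(κ x) := by
        exact integral_congr_ae (Filter.Eventually.of_forall fun y => (hinner y).symm)

end Aux

/-- Iterates of a Markov kernel: `iterKernel K 0 = id` (Dirac), and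
`iterKernel K (n+1)` first runs `n` steps and then one more step of `K`. -/
noncomputable def iterKernel {X : Type*} [MeasurableSpace X]
    (K : Kernel X X) : ℕ → Kernel X X
  | 0 => Kernel.id
  | n + 1 => K.comp (iterKernel K n)

section Iter
variable {X : Type*} [MeasurableSpace X]

instance iterKernel_markov (K : Kernel X X) [IsMarkovKernel K] (n : ℕ) :
    IsMarkovKernel (iterKernel K n) := by
  induction n with
  | zero => rw [iterKernel]; infer_instance
  | succ n ih => rw [iterKernel]; infer_instance

lemma iterKernel_succ' (K : Kernel X X) [IsMarkovKernel K] (n : ℕ) :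
    iterKernel K (n + 1) = (iterKernel K n).comp K := by
  induction n with
  | zero =>
    show K.comp Kernel.id = Kernel.id.comp K
    rw [Kernel.comp_id, Kernel.id_comp]
  | succ n ih =>
    calc K.comp (iterKernel K (n + 1))
        = K.comp ((iterKernel K n).comp K) := by rw [ih]
      _ = (K.comp (iterKernel K n)).comp K := (Kernel.comp_assoc _ _ _).symm
      _ = (iterKernel K (n + 1)).comp K := rfl

lemma iterKernel_zero_apply (K : Kernel X X) (x : X) :
    iterKernel K 0 x = Measure.dirac x := by
  rw [iterKernel, Kernel.id_apply]

end Iter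

/-- under uniform geometric ergodicity towards the invariant
probability measure `π`, the function `φ̂(x) = ∑_n (K^n(φ)(x) − π(φ))` solves
the Poisson equation `φ̂ − K(φ̂) = φ − π(φ)`. -/
theorem poisson_equation_solution
    {X : Type*} [MeasurableSpace X]
    (K : Kernel X X) [IsMarkovKernel K]
    (π : Measure X) [IsProbabilityMeasure π]
    (hinv : Kernel.Invariant K π)
    (C ρ : ℝ) (hC : 0 < C) (hρ0 : 0 < ρ) (hρ1 : ρ < 1)
    (hconv : ∀ n : ℕ, 1 ≤ n → ∀ x : X, ∀ A : Set X, MeasurableSet A →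
      |(iterKernel K n x A).toReal - (π A).toReal| ≤ C * ρ ^ n)
    (φ : X → ℝ) (hφmeas : Measurable φ) (hφbdd : ∃ M : ℝ, ∀ x, |φ x| ≤ M) :
    ∀ x : X,
      (∑' n : ℕ, ((∫ y, φ y ∂(iterKernel K n x)) - ∫ y, φ y ∂π)) -
        (∫ y, (∑' n : ℕ, ((∫ z, φ z ∂(iterKernel K n y)) - ∫ z, φ z ∂π)) ∂(K x)) =
      φ x - ∫ y, φ y ∂π := by
  obtain ⟨M₀, hM₀⟩ := hφbdd
  set M : ℝ := max M₀ 0 with hMdef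
  have hM : ∀ x, |φ x| ≤ M := fun x => (hM₀ x).trans (le_max_left _ _)
  have hM0 : 0 ≤ M := le_max_right _ _
  intro x
  set g : ℕ → X → ℝ := fun n y => (∫ z, φ z ∂(iterKernel K n y)) - ∫ z, φ z ∂π with hgdef
  set E : ℝ := max (2 * M) (2 * M * C) with hEdef
  have hE1 : 2 * M ≤ E := le_max_left _ _
  have hE2 : 2 * M * C ≤ E := le_max_right _ _
  have hE0 : 0 ≤ E := le_trans (by linarith) hE1
  have hmeas : ∀ n : ℕ, StronglyMeasurable fun y => ∫ z, φ z ∂(iterKernel K n y) := by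
    intro n
    exact MeasureTheory.StronglyMeasurable.integral_kernel_prod_right
      (κ := iterKernel K n) (f := fun _ z => φ z)
      (hφmeas.stronglyMeasurable.comp_measurable measurable_snd)
  have hgmeas : ∀ n, StronglyMeasurable (g n) := fun n =>
    (hmeas n).sub stronglyMeasurable_const
  have hIb : ∀ (m : Measure X) [IsProbabilityMeasure m], ‖∫ z, φ z ∂m‖ ≤ M := by
    intro m _
    calc ‖∫ z, φ z ∂m‖ ≤ M * (m Set.univ).toReal :=
          norm_integral_le_of_norm_le_const
            (Filter.Eventually.of_forall fun z => by rw [Real.norm_eq_abs]; exact hM z)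
      _ = M := by simp
  have hzero : ∀ y, g 0 y = φ y - ∫ z, φ z ∂π := by
    intro y
    rw [hgdef]
    simp only []
    rw [iterKernel_zero_apply, integral_dirac' φ y hφmeas.stronglyMeasurable]
  have habs : ∀ n (y : X), |g n y| ≤ E * ρ ^ n := by
    intro n y
    match n with
    | 0 =>
      rw [hzero y, pow_zero, mul_one]
      have h1 := hIb π
      rw [Real.norm_eq_abs] at h1
      calc |φ y - ∫ z, φ z ∂π| ≤ |φ y| + |∫ z, φ z ∂π| := abs_sub _ _
        _ ≤ M + M := add_le_add (hM y) h1
        _ ≤ E := by linarith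
    | n + 1 =>
      have h1 : |g (n + 1) y| ≤ 2 * M * (C * ρ ^ (n + 1)) :=
        tv_integral_bound (iterKernel K (n + 1) y) π φ hφmeas M hM0 hM (C * ρ ^ (n + 1))
          (le_of_lt (mul_pos hC (pow_pos hρ0 _)))
          (fun A hA => hconv (n + 1) (Nat.succ_le_succ (Nat.zero_le n)) y A hA)
      calc |g (n + 1) y| ≤ 2 * M * C * ρ ^ (n + 1) := by rw [mul_assoc]; exact h1
        _ ≤ E * ρ ^ (n + 1) :=
          mul_le_mul_of_nonneg_right hE2 (le_of_lt (pow_pos hρ0 _))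
  have hgeo : Summable fun n : ℕ => E * ρ ^ n :=
    (summable_geometric_of_lt_one hρ0.le hρ1).mul_left E
  have hsum : ∀ y, Summable fun n => g n y := by
    intro y
    refine Summable.of_norm_bounded hgeo fun n => ?_
    rw [Real.norm_eq_abs]; exact habs n y
  have hstep : ∀ n, ∫ y, g n y ∂(K x) = g (n + 1) x := by
    intro n
    have hi : Integrable (fun y => ∫ z, φ z ∂(iterKernel K n y)) (K x) :=
      Integrable.mono' (integrable_const M) (hmeas n).aestronglyMeasurable
        (Filter.Eventually.of_forall fun y => hIb (iterKernel K n y))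
    have h2 : ∫ y, g n y ∂(K x)
        = (∫ y, ∫ z, φ z ∂(iterKernel K n y) ∂(K x)) - ∫ z, φ z ∂π := by
      rw [hgdef]
      simp only []
      rw [integral_sub hi (integrable_const _), integral_const]
      simp
    rw [h2, hgdef]
    simp only []
    congr 1
    rw [iterKernel_succ']
    exact (integral_comp_markov (iterKernel K n) K x φ hφmeas M hM).symm
  have hinter : ∫ y, (∑' n, g n y) ∂(K x) = ∑' n, ∫ y, g n y ∂(K x) := by
    refine integral_tsum (fun n => (hgmeas n).aestronglyMeasurable) ?_
    have hb : ∀ n, ∫⁻ y, ‖g n y‖₊ ∂(K x) ≤ ENNReal.ofReal (E * ρ ^ n) := by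
      intro n
      calc ∫⁻ y, ‖g n y‖₊ ∂(K x)
          ≤ ∫⁻ _, ENNReal.ofReal (E * ρ ^ n) ∂(K x) := by
            refine lintegral_mono fun y => ?_
            rw [← enorm_eq_nnnorm, ← ofReal_norm]
            exact ENNReal.ofReal_le_ofReal (by rw [Real.norm_eq_abs]; exact habs n y)
        _ = ENNReal.ofReal (E * ρ ^ n) := by simp
    have hlt : ∑' n, ∫⁻ y, ‖g n y‖₊ ∂(K x) < ⊤ := by
      calc ∑' n, ∫⁻ y, ‖g n y‖₊ ∂(K x) ≤ ∑' n, ENNReal.ofReal (E * ρ ^ n) :=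
            ENNReal.tsum_le_tsum hb
        _ = ENNReal.ofReal (∑' n, E * ρ ^ n) :=
            (ENNReal.ofReal_tsum_of_nonneg
              (fun n => mul_nonneg hE0 (le_of_lt (pow_pos hρ0 _))) hgeo).symm
        _ < ⊤ := ENNReal.ofReal_lt_top
    exact hlt.ne
  calc (∑' n, g n x) - ∫ y, (∑' n, g n y) ∂(K x)
      = (∑' n, g n x) - ∑' n, g (n + 1) x := by
        rw [hinter]
        congr 1
        exact tsum_congr hstep
    _ = g 0 x := by
        rw [(hsum x).tsum_eq_zero_add]
        ring
    _ = φ x - ∫ y, φ y ∂π := hzero x
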